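/- Let d ≥ 1 be an integer, b > 0, q ≥ 1, and let Z₁, …, Z_d be independent real random variables, each with the generalized Gaussian distribution of scale b and shape q, whose common variance is σ² = b²·Γ(3/q)/Γ(1/q). Let S = Z₁ + ⋯ + Z_d. Then for every real τ > 0 with τ²·d ≥ 16 and every real s, P(S ≥ s) ≤ exp(−s/(τσ√d)) · exp(4/τ²). -/

import Mathlib

open MeasureTheory Real

/-- The generalized Gaussian distribution with scale `b` and shape `q`:
density `z ↦ (q/(2bΓ(1/q))) · exp(−(|z|/b)^q)` w.r.t. Lebesgue measure. -/
noncomputable def genGaussian (b q : ℝ) : Measure ℝ :=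
  volume.withDensity
    (fun z => ENNReal.ofReal ((q / (2 * b * Real.Gamma (1 / q))) * Real.exp (-((|z| / b) ^ q))))

open Set
open scoped ENNReal NNReal

lemma Gamma_le_one_of_mem (x : ℝ) (h1 : 1 ≤ x) (h2 : x ≤ 2) : Real.Gamma x ≤ 1 := by
  have h := Real.convexOn_Gamma.2 (Set.mem_Ioi.mpr (by norm_num : (0:ℝ) < 1))
    (Set.mem_Ioi.mpr (by norm_num : (0:ℝ) < 2))
    (by linarith : (0:ℝ) ≤ 2 - x) (by linarith : (0:ℝ) ≤ x - 1) (by ring)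
  simp only [smul_eq_mul, Real.Gamma_one, Real.Gamma_two] at h
  have hx : (2 - x) * (1:ℝ) + (x - 1) * 2 = x := by ring
  rw [hx] at h
  linarith

lemma pi_div_four_le_Gamma (x : ℝ) (h1 : 1 ≤ x) (h2 : x ≤ 2) : π / 4 ≤ Real.Gamma x := by
  have hx0 : (0:ℝ) < x := by linarith
  have hy0 : (0:ℝ) < 3 - x := by linarith
  have h := Real.convexOn_log_Gamma.2 (Set.mem_Ioi.mpr hx0) (Set.mem_Ioi.mpr hy0)
    (by norm_num : (0:ℝ) ≤ 1/2) (by norm_num : (0:ℝ) ≤ 1/2) (by norm_num)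
  simp only [smul_eq_mul, Function.comp_apply] at h
  have hmid : (1:ℝ)/2 * x + 1/2 * (3 - x) = 3/2 := by ring
  rw [hmid] at h
  have hGx : 0 < Real.Gamma x := Real.Gamma_pos_of_pos hx0
  have hGy : 0 < Real.Gamma (3 - x) := Real.Gamma_pos_of_pos hy0
  have hG32pos : 0 < Real.Gamma (3/2) := Real.Gamma_pos_of_pos (by norm_num)
  have hG32 : Real.Gamma (3/2) = Real.sqrt π / 2 := by
    have h32 : (3:ℝ)/2 = 1/2 + 1 := by norm_num
    rw [h32, Real.Gamma_add_one (by norm_num), Real.Gamma_one_half_eq]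
    ring
  have hsq : Real.Gamma (3/2) ^ 2 ≤ Real.Gamma x * Real.Gamma (3 - x) := by
    have h2 : 2 * Real.log (Real.Gamma (3/2)) ≤
        Real.log (Real.Gamma x) + Real.log (Real.Gamma (3 - x)) := by linarith
    have h3 := Real.exp_le_exp.mpr h2
    rw [Real.exp_add, Real.exp_log hGx, Real.exp_log hGy] at h3
    have h4 : Real.exp (2 * Real.log (Real.Gamma (3/2))) = Real.Gamma (3/2) ^ 2 := by
      rw [two_mul, Real.exp_add, Real.exp_log hG32pos, sq]
    rw [h4] at h3
    exact h3
  have hval : Real.Gamma (3/2) ^ 2 = π / 4 := by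
    rw [hG32, div_pow, Real.sq_sqrt Real.pi_nonneg]
    norm_num
  have hy1 : Real.Gamma (3 - x) ≤ 1 := Gamma_le_one_of_mem _ (by linarith) (by linarith)
  nlinarith

lemma Gamma_le_inv_self (u : ℝ) (hu0 : 0 < u) (hu1 : u ≤ 1) : Real.Gamma u ≤ 1 / u := by
  have h := Real.Gamma_add_one (ne_of_gt hu0)
  have h1 : Real.Gamma (u + 1) ≤ 1 := Gamma_le_one_of_mem _ (by linarith) (by linarith)
  rw [h] at h1
  rw [le_div_iff₀ hu0]
  linarith [mul_comm u (Real.Gamma u)]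

set_option maxHeartbeats 1000000 in
/-- Key lemma: `12^(u-1) ≤ Γ(3u)/Γ(u)` for `u ∈ (0,1]`, stated multiplicatively. -/
lemma twelve_rpow_mul_Gamma_le (u : ℝ) (hu0 : 0 < u) (hu1 : u ≤ 1) :
    (12:ℝ) ^ (u - 1) * Real.Gamma u ≤ Real.Gamma (3 * u) := by
  have hπ : (3.141592 : ℝ) < π := Real.pi_gt_d6
  have h12 : (0:ℝ) ≤ 12 := by norm_num
  obtain ⟨a, ha_pos, ha1, ha2, haL, haU⟩ :
      ∃ a : ℝ, 0 < a ∧ (12:ℝ) ^ (-(1/3) : ℝ) = a ∧ (12:ℝ) ^ (-(2/3) : ℝ) = a ^ 2 ∧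
        (0.4367:ℝ) ≤ a ∧ a ≤ 0.4368 := by
    refine ⟨(12:ℝ) ^ (-(1/3) : ℝ), Real.rpow_pos_of_pos (by norm_num) _, rfl, ?_, ?_, ?_⟩
    · rw [← Real.rpow_natCast ((12:ℝ) ^ (-(1/3):ℝ)) 2, ← Real.rpow_mul h12]
      norm_num
    all_goals {
      have ha3 : ((12:ℝ) ^ (-(1/3) : ℝ)) ^ (3:ℕ) = 1 / 12 := by
        rw [← Real.rpow_natCast ((12:ℝ) ^ (-(1/3):ℝ)) 3, ← Real.rpow_mul h12]
        norm_num
      have hpos : (0:ℝ) < (12:ℝ) ^ (-(1/3) : ℝ) := Real.rpow_pos_of_pos (by norm_num) _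
      by_contra hc
      push_neg at hc
      first
      | (have h3 : ((12:ℝ) ^ (-(1/3):ℝ)) ^ (3:ℕ) < (0.4367:ℝ) ^ (3:ℕ) :=
          pow_lt_pow_left₀ hc (le_of_lt hpos) (by norm_num)
         rw [ha3] at h3; norm_num at h3)
      | (have h3 : (0.4368:ℝ) ^ (3:ℕ) < ((12:ℝ) ^ (-(1/3):ℝ)) ^ (3:ℕ) :=
          pow_lt_pow_left₀ hc (by norm_num) (by norm_num)
         rw [ha3] at h3; norm_num at h3) }
  have hGu_pos : 0 < Real.Gamma u := Real.Gamma_pos_of_pos hu0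
  have hGu : Real.Gamma u ≤ 1 / u := Gamma_le_inv_self u hu0 hu1
  have key : ∀ X : ℝ, 0 ≤ X → (12:ℝ) ^ (u - 1) ≤ X → X ≤ u * Real.Gamma (3 * u) →
      (12:ℝ) ^ (u - 1) * Real.Gamma u ≤ Real.Gamma (3 * u) := by
    intro X hX0 hXl hXu
    have h1 : (12:ℝ) ^ (u - 1) * Real.Gamma u ≤ X * (1/u) :=
      mul_le_mul hXl hGu (le_of_lt hGu_pos) hX0
    have h2 : X * (1/u) ≤ (u * Real.Gamma (3*u)) * (1/u) :=
      mul_le_mul_of_nonneg_right hXu (by positivity)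
    have h3 : (u * Real.Gamma (3*u)) * (1/u) = Real.Gamma (3*u) := by
      field_simp
    linarith
  rcases le_or_gt u (1/3) with hcase | hcase
  · -- u ≤ 1/3
    have hbig : π / 4 ≤ Real.Gamma (3*u + 1) :=
      pi_div_four_le_Gamma _ (by linarith) (by linarith)
    have hrec : Real.Gamma (3*u + 1) = 3*u * Real.Gamma (3*u) :=
      Real.Gamma_add_one (by positivity)
    refine key (a^2) (by positivity) ?_ ?_
    · rw [← ha2]
      exact Real.rpow_le_rpow_of_exponent_le (by norm_num) (by linarith)
    · nlinarith
  rcases le_or_gt u (2/3) with hcase2 | hcase2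
  · -- 1/3 < u ≤ 2/3
    have hbig : π / 4 ≤ Real.Gamma (3*u) :=
      pi_div_four_le_Gamma _ (by linarith) (by linarith)
    refine key ((2 - 3*u) * a^2 + (3*u - 1) * a) ?_ ?_ ?_
    · have : (0:ℝ) ≤ 2 - 3*u := by linarith
      have : (0:ℝ) ≤ 3*u - 1 := by linarith
      positivity
    · have hw1 : (0:ℝ) ≤ 2 - 3*u := by linarith
      have hw2 : (0:ℝ) ≤ 3*u - 1 := by linarith
      have hgm := Real.geom_mean_le_arith_mean2_weighted hw1 hw2
        (by positivity : (0:ℝ) ≤ a ^ 2) (le_of_lt ha_pos) (by ring)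
      refine le_trans (le_of_eq ?_) hgm
      rw [← ha2, ← ha1, ← Real.rpow_mul h12, ← Real.rpow_mul h12,
        ← Real.rpow_add (by norm_num : (0:ℝ) < 12)]
      congr 1
      ring
    · have e1 : (0:ℝ) ≤ π/12 - a ^ 2 := by nlinarith
      have e2 : (0:ℝ) ≤ π/6 - a := by nlinarith
      nlinarith [mul_nonneg (by linarith : (0:ℝ) ≤ 2/3 - u) e1,
        mul_nonneg (by linarith : (0:ℝ) ≤ u - 1/3) e2]
  · -- 2/3 < u ≤ 1
    have h3u : Real.Gamma (3*u) = (3*u - 1) * Real.Gamma (3*u - 1) := by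
      have h := Real.Gamma_add_one (s := 3*u - 1) (ne_of_gt (by linarith))
      rw [show (3*u - 1) + 1 = 3*u by ring] at h
      exact h
    have hbig : π / 4 ≤ Real.Gamma (3*u - 1) :=
      pi_div_four_le_Gamma _ (by linarith) (by linarith)
    refine key ((3 - 3*u) * a + (3*u - 2)) ?_ ?_ ?_
    · have : (0:ℝ) ≤ 3 - 3*u := by linarith
      have : (0:ℝ) ≤ 3*u - 2 := by linarith
      positivity
    · have hw1 : (0:ℝ) ≤ 3 - 3*u := by linarith
      have hw2 : (0:ℝ) ≤ 3*u - 2 := by linarith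
      have hgm := Real.geom_mean_le_arith_mean2_weighted hw1 hw2
        (le_of_lt ha_pos) (by norm_num : (0:ℝ) ≤ 1) (by ring)
      have heq : a ^ (3 - 3*u) * (1:ℝ) ^ (3*u - 2) = (12:ℝ) ^ (u - 1) := by
        rw [Real.one_rpow, mul_one, ← ha1, ← Real.rpow_mul h12]
        congr 1
        ring
      rw [heq] at hgm
      linarith [hgm]
    · rw [h3u]
      have hB : (0:ℝ) ≤ 3*π/4 * u + π/4 - 3 + 3*a := by nlinarith
      have e2 : (0:ℝ) ≤ π/6 - a := by nlinarith
      have hq : (3 - 3*u) * a + (3*u - 2) ≤ π / 4 * u * (3*u - 1) := by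
        nlinarith [mul_nonneg (by linarith : (0:ℝ) ≤ u - 2/3) hB]
      have hmono : π / 4 * u * (3*u - 1) ≤ u * ((3*u - 1) * Real.Gamma (3*u - 1)) := by
        have h1 : (0:ℝ) ≤ u * (3*u - 1) := by nlinarith
        nlinarith [mul_le_mul_of_nonneg_left hbig h1]
      linarith

/-- Interpolation via log-convexity: `Γ(x+2u) ≤ Γ(x)·(x(x+1))^u` for `x>0`, `0≤u≤1`. -/
lemma Gamma_add_two_mul_le (x u : ℝ) (hx : 0 < x) (hu0 : 0 ≤ u) (hu1 : u ≤ 1) :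
    Real.Gamma (x + 2*u) ≤ Real.Gamma x * (x*(x+1)) ^ u := by
  have hx2 : (0:ℝ) < x + 2 := by linarith
  have h := Real.convexOn_log_Gamma.2 (Set.mem_Ioi.mpr hx) (Set.mem_Ioi.mpr hx2)
    (by linarith : (0:ℝ) ≤ 1 - u) (hu0) (by ring)
  simp only [smul_eq_mul, Function.comp_apply] at h
  rw [show (1 - u) * x + u * (x + 2) = x + 2*u by ring] at h
  have hGx : 0 < Real.Gamma x := Real.Gamma_pos_of_pos hx
  have hGx2 : Real.Gamma (x + 2) = (x+1) * (x * Real.Gamma x) := by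
    have h1 := Real.Gamma_add_one (s := x + 1) (ne_of_gt (by linarith))
    have h2 := Real.Gamma_add_one (s := x) (ne_of_gt hx)
    rw [show x + 1 + 1 = x + 2 by ring] at h1
    rw [h1, h2]
  have hlog : Real.log (Real.Gamma (x+2)) = Real.log (Real.Gamma x) + Real.log (x*(x+1)) := by
    rw [hGx2, show (x+1) * (x * Real.Gamma x) = (x*(x+1)) * Real.Gamma x by ring,
      Real.log_mul (by positivity) (ne_of_gt hGx)]
    ring
  rw [hlog] at h
  have hmono := Real.exp_le_exp.mpr h
  rw [Real.exp_log (Real.Gamma_pos_of_pos (by linarith : (0:ℝ) < x + 2*u))] at hmono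
  refine le_trans hmono (le_of_eq ?_)
  rw [show (1-u) * Real.log (Real.Gamma x) + u * (Real.log (Real.Gamma x) + Real.log (x*(x+1)))
      = Real.log (Real.Gamma x) + Real.log (x*(x+1)) * u by ring]
  rw [Real.exp_add, Real.exp_log hGx, ← Real.rpow_def_of_pos (by positivity)]

/-- Moment bound by induction: `Γ((2k+1)u)·Γ(u)^k ≤ (2k)!·Γ(3u)^k·Γ(u)` for `u ∈ (0,1]`. -/
lemma Gamma_moment_bound (u : ℝ) (hu0 : 0 < u) (hu1 : u ≤ 1) (k : ℕ) :
    Real.Gamma ((2*k+1)*u) * Real.Gamma u ^ k ≤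
      (Nat.factorial (2*k) : ℝ) * Real.Gamma (3*u) ^ k * Real.Gamma u := by
  have hGu : 0 < Real.Gamma u := Real.Gamma_pos_of_pos hu0
  have hG3u : 0 < Real.Gamma (3*u) := Real.Gamma_pos_of_pos (by positivity)
  induction k with
  | zero => simp
  | succ k ih =>
    push_cast
    rcases Nat.eq_zero_or_pos k with hk0 | hk1
    · subst hk0
      norm_num
      nlinarith
    · -- k ≥ 1 step
      set x : ℝ := (2*k+1)*u with hx_def
      have hx_pos : 0 < x := by positivity
      have hGx : 0 < Real.Gamma x := Real.Gamma_pos_of_pos hx_pos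
      set M : ℝ := (2*k+1)*(2*k+2) with hM_def
      have hM12 : (12:ℝ) ≤ M := by
        have : (1:ℝ) ≤ (k:ℝ) := by exact_mod_cast hk1
        nlinarith
      have hM_pos : (0:ℝ) < M := by positivity
      have step1 : Real.Gamma ((2*(k+1)+1)*u) ≤ Real.Gamma x * (x*(x+1)) ^ u := by
        rw [show (2*((k:ℝ)+1)+1)*u = x + 2*u by push_cast; ring]
        exact Gamma_add_two_mul_le x u hx_pos (le_of_lt hu0) hu1
      have step2 : (x*(x+1)) ^ u ≤ M ^ u := by
        apply Real.rpow_le_rpow (by positivity) ?_ (le_of_lt hu0)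
        have hxle : x ≤ 2*k+1 := by
          rw [hx_def]
          nlinarith
        nlinarith
      have step3 : M ^ u = M * M ^ (u - 1) := by
        nth_rewrite 2 [show M = M ^ (1:ℝ) by rw [Real.rpow_one]]
        rw [← Real.rpow_add hM_pos]
        congr 1
        ring
      have step4 : M ^ (u-1) ≤ (12:ℝ) ^ (u-1) := by
        have h1 : M ^ (u-1) = (12:ℝ) ^ (u-1) * (M/12) ^ (u-1) := by
          rw [← Real.mul_rpow (by norm_num) (by positivity)]
          congr 1
          field_simp
        rw [h1]
        have h2 : (M/12) ^ (u-1) ≤ 1 :=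
          Real.rpow_le_one_of_one_le_of_nonpos (by linarith [hM12]; ) (by linarith)
        nlinarith [Real.rpow_pos_of_pos (show (0:ℝ) < 12 by norm_num) (u-1)]
      have step5 : (12:ℝ) ^ (u-1) * Real.Gamma u ≤ Real.Gamma (3*u) :=
        twelve_rpow_mul_Gamma_le u hu0 hu1
      -- combine: Γ((2k+3)u) * Γu^{k+1} ≤ M * Γ(3u) * (Γ(x) * Γu^k)
      have hchain : Real.Gamma ((2*(k+1)+1)*u) * Real.Gamma u ^ (k+1) ≤
          M * Real.Gamma (3*u) * (Real.Gamma x * Real.Gamma u ^ k) := by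
        have c1 : Real.Gamma ((2*(k+1)+1)*u) * Real.Gamma u ^ (k+1) ≤
            (Real.Gamma x * (M * M ^ (u-1))) * (Real.Gamma u * Real.Gamma u ^ k) := by
          rw [pow_succ]
          have : Real.Gamma ((2*(k+1)+1)*u) ≤ Real.Gamma x * (M * M ^ (u-1)) := by
            calc Real.Gamma ((2*(k+1)+1)*u) ≤ Real.Gamma x * (x*(x+1)) ^ u := step1
              _ ≤ Real.Gamma x * M ^ u := by
                  exact mul_le_mul_of_nonneg_left step2 (le_of_lt hGx)
              _ = Real.Gamma x * (M * M ^ (u-1)) := by rw [← step3]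
          calc Real.Gamma ((2*(k+1)+1)*u) * (Real.Gamma u ^ k * Real.Gamma u)
              ≤ (Real.Gamma x * (M * M ^ (u-1))) * (Real.Gamma u ^ k * Real.Gamma u) := by
                apply mul_le_mul_of_nonneg_right this (by positivity)
            _ = (Real.Gamma x * (M * M ^ (u-1))) * (Real.Gamma u * Real.Gamma u ^ k) := by ring
        have c2 : (Real.Gamma x * (M * M ^ (u-1))) * (Real.Gamma u * Real.Gamma u ^ k) ≤
            (Real.Gamma x * (M * (12:ℝ) ^ (u-1))) * (Real.Gamma u * Real.Gamma u ^ k) := by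
          have hM4 : Real.Gamma x * (M * M ^ (u-1)) ≤ Real.Gamma x * (M * (12:ℝ) ^ (u-1)) := by
            apply mul_le_mul_of_nonneg_left ?_ (le_of_lt hGx)
            apply mul_le_mul_of_nonneg_left step4 (le_of_lt hM_pos)
          apply mul_le_mul_of_nonneg_right hM4 (by positivity)
        have c3 : (Real.Gamma x * (M * (12:ℝ) ^ (u-1))) * (Real.Gamma u * Real.Gamma u ^ k) =
            (M * ((12:ℝ) ^ (u-1) * Real.Gamma u)) * (Real.Gamma x * Real.Gamma u ^ k) := by
          ring
        have c4 : (M * ((12:ℝ) ^ (u-1) * Real.Gamma u)) * (Real.Gamma x * Real.Gamma u ^ k) ≤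
            (M * Real.Gamma (3*u)) * (Real.Gamma x * Real.Gamma u ^ k) := by
          apply mul_le_mul_of_nonneg_right ?_ (by positivity)
          apply mul_le_mul_of_nonneg_left step5 (le_of_lt hM_pos)
        calc Real.Gamma ((2*(k+1)+1)*u) * Real.Gamma u ^ (k+1)
            ≤ (Real.Gamma x * (M * M ^ (u-1))) * (Real.Gamma u * Real.Gamma u ^ k) := c1
          _ ≤ (Real.Gamma x * (M * (12:ℝ) ^ (u-1))) * (Real.Gamma u * Real.Gamma u ^ k) := c2
          _ = (M * ((12:ℝ) ^ (u-1) * Real.Gamma u)) * (Real.Gamma x * Real.Gamma u ^ k) := c3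
          _ ≤ (M * Real.Gamma (3*u)) * (Real.Gamma x * Real.Gamma u ^ k) := c4
          _ = M * Real.Gamma (3*u) * (Real.Gamma x * Real.Gamma u ^ k) := by ring
      have hfinal : M * Real.Gamma (3*u) * (Real.Gamma x * Real.Gamma u ^ k) ≤
          M * Real.Gamma (3*u) * ((Nat.factorial (2*k) : ℝ) * Real.Gamma (3*u) ^ k
            * Real.Gamma u) := by
        apply mul_le_mul_of_nonneg_left ih (by positivity)
      have hfact : M * (Nat.factorial (2*k) : ℝ) = (Nat.factorial (2*(k+1)) : ℝ) := by
        rw [hM_def, show 2*(k+1) = (2*k+1)+1 by ring, Nat.factorial_succ, Nat.factorial_succ]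
        push_cast
        ring
      calc Real.Gamma ((2*(k+1)+1)*u) * Real.Gamma u ^ (k+1)
          ≤ M * Real.Gamma (3*u) * ((Nat.factorial (2*k) : ℝ) * Real.Gamma (3*u) ^ k
            * Real.Gamma u) := le_trans hchain hfinal
        _ = (M * (Nat.factorial (2*k) : ℝ)) * Real.Gamma (3*u) ^ (k+1) * Real.Gamma u := by
            rw [pow_succ]; ring
        _ = (Nat.factorial (2*(k+1)) : ℝ) * Real.Gamma (3*u) ^ (k+1) * Real.Gamma u := by
            rw [hfact]

lemma lintegral_pi_pow (μ : Measure ℝ) [SigmaFinite μ] (f : ℝ → ENNReal)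
    (hf : Measurable f) (n : ℕ) :
    ∫⁻ x : Fin n → ℝ, ∏ i, f (x i) ∂(Measure.pi fun _ : Fin n => μ) =
      (∫⁻ z, f z ∂μ) ^ n := by
  induction n with
  | zero =>
    simp only [Finset.univ_eq_empty, Finset.prod_empty, pow_zero, lintegral_const, one_mul]
    rw [Measure.pi_empty_univ]
  | succ n ih =>
    have mp := (MeasureTheory.measurePreserving_piFinSuccAbove (fun _ : Fin (n+1) => μ) 0)
    set e := MeasurableEquiv.piFinSuccAbove (fun _ : Fin (n+1) => ℝ) 0 with he
    have hH : Measurable (fun p : ℝ × (Fin n → ℝ) => f p.1 * ∏ i, f (p.2 i)) := by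
      apply Measurable.mul (hf.comp measurable_fst)
      apply Finset.measurable_prod
      intro i _
      exact hf.comp ((measurable_pi_apply i).comp measurable_snd)
    have key : ∫⁻ x : Fin (n+1) → ℝ, ∏ i, f (x i) ∂(Measure.pi fun _ => μ) =
        ∫⁻ p : ℝ × (Fin n → ℝ), f p.1 * ∏ i, f (p.2 i)
          ∂(μ.prod (Measure.pi fun _ : Fin n => μ)) := by
      rw [← mp.lintegral_comp hH]
      congr 1
      ext x
      rw [Fin.prod_univ_succ]
      rfl
    rw [key, lintegral_prod _ hH.aemeasurable]
    simp only
    calc ∫⁻ z, ∫⁻ y : Fin n → ℝ, f z * ∏ i, f (y i) ∂(Measure.pi fun _ : Fin n => μ) ∂μ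
        = ∫⁻ z, f z * ∫⁻ y : Fin n → ℝ, ∏ i, f (y i) ∂(Measure.pi fun _ : Fin n => μ) ∂μ := by
          apply lintegral_congr
          intro z
          rw [lintegral_const_mul _ (by
            apply Finset.measurable_prod
            intro i _
            exact hf.comp (measurable_pi_apply i))]
      _ = ∫⁻ z, f z * (∫⁻ w, f w ∂μ) ^ n ∂μ := by rw [ih]
      _ = (∫⁻ z, f z ∂μ) ^ (n+1) := by
          rw [lintegral_mul_const _ hf, pow_succ, mul_comm ((∫⁻ z, f z ∂μ) ^ n)]

lemma genGaussian_mgf_le (b q : ℝ) (hb : 0 < b) (hq : 1 ≤ q) (σ : ℝ)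
    (hσ : σ^2 = b^2 * Real.Gamma (3/q) / Real.Gamma (1/q)) (t : ℝ)
    (ht : t^2 * σ^2 ≤ 1/16) :
    ∫⁻ z, ENNReal.ofReal (Real.exp (t*z)) ∂(genGaussian b q)
      ≤ ENNReal.ofReal (Real.exp (4*(t^2*σ^2))) := by
  have hq0 : (0:ℝ) < q := lt_of_lt_of_le one_pos hq
  have hΓq : 0 < Real.Gamma (1/q) := Real.Gamma_pos_of_pos (by positivity)
  have hΓ3q : 0 < Real.Gamma (3/q) := Real.Gamma_pos_of_pos (by positivity)
  set c : ℝ := q / (2 * b * Real.Gamma (1/q)) with hc_def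
  have hc : 0 < c := by positivity
  set ρ : ℝ → ℝ := fun z => c * Real.exp (-((|z|/b) ^ q)) with hρ_def
  have hρ_nonneg : ∀ z, 0 ≤ ρ z := fun z => by positivity
  have hρm : Measurable ρ := by
    apply Measurable.const_mul
    exact (((measurable_abs.div_const b).pow measurable_const).neg).exp
  have hgm : ∀ s : ℝ, Measurable fun z : ℝ => ENNReal.ofReal (Real.exp (s*z)) := by
    intro s
    exact ((measurable_id.const_mul s).exp).ennreal_ofReal
  have hρm' : Measurable fun z => ENNReal.ofReal (ρ z) := hρm.ennreal_ofReal
  -- F s z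
  have hFm : ∀ s : ℝ, Measurable fun z : ℝ =>
      ENNReal.ofReal (ρ z) * ENNReal.ofReal (Real.exp (s*z)) := by
    intro s
    exact hρm'.mul (hgm s)
  -- Step A : withDensity
  have hA : ∫⁻ z, ENNReal.ofReal (Real.exp (t*z)) ∂(genGaussian b q)
      = ∫⁻ z, ENNReal.ofReal (ρ z) * ENNReal.ofReal (Real.exp (t*z)) ∂volume := by
    rw [genGaussian, lintegral_withDensity_eq_lintegral_mul _ hρm' (hgm t)]
    rfl
  -- Step B : symmetry
  have hsym : ∀ s : ℝ, (∫⁻ z, ENNReal.ofReal (ρ z) * ENNReal.ofReal (Real.exp (s*z)) ∂volume)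
      = ∫⁻ z, ENNReal.ofReal (ρ z) * ENNReal.ofReal (Real.exp (-s*z)) ∂volume := by
    intro s
    have h := (Measure.measurePreserving_neg (volume : Measure ℝ)).lintegral_comp (hFm s)
    rw [← h]
    apply lintegral_congr
    intro z
    simp only [hρ_def, abs_neg, mul_neg, neg_mul]
  set K : ℝ≥0∞ := ∫⁻ z, ENNReal.ofReal (ρ z) * ENNReal.ofReal (Real.cosh (t*z)) ∂volume with hK_def
  have hcoshm : Measurable fun z : ℝ =>
      ENNReal.ofReal (ρ z) * ENNReal.ofReal (Real.cosh (t*z)) :=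
    hρm'.mul ((measurable_id.const_mul t).cosh).ennreal_ofReal
  have hIK : ∫⁻ z, ENNReal.ofReal (ρ z) * ENNReal.ofReal (Real.exp (t*z)) ∂volume = K := by
    have h2 : (∫⁻ z, ENNReal.ofReal (ρ z) * ENNReal.ofReal (Real.exp (t*z)) ∂volume)
        + (∫⁻ z, ENNReal.ofReal (ρ z) * ENNReal.ofReal (Real.exp (t*z)) ∂volume) = K + K := by
      nth_rewrite 2 [hsym t]
      rw [← lintegral_add_left (hFm t), hK_def, ← lintegral_add_left hcoshm]
      apply lintegral_congr
      intro z
      rw [← mul_add, ← mul_add, ← ENNReal.ofReal_add (Real.exp_pos _).le (Real.exp_pos _).le,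
        ← ENNReal.ofReal_add (Real.cosh_pos _).le (Real.cosh_pos _).le]
      congr 2
      rw [Real.cosh_eq]
      ring_nf
    have hmul : (2:ℝ≥0∞) * (∫⁻ z, ENNReal.ofReal (ρ z) * ENNReal.ofReal (Real.exp (t*z)) ∂volume)
        = 2 * K := by rw [two_mul, two_mul, h2]
    exact le_antisymm
      ((ENNReal.mul_le_mul_iff_right (two_ne_zero) (by norm_num)).mp (le_of_eq hmul))
      ((ENNReal.mul_le_mul_iff_right (two_ne_zero) (by norm_num)).mp (le_of_eq hmul.symm))
  rw [hA, hIK]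
  -- Step C : cosh series
  have hterm_nonneg : ∀ (y : ℝ) (n : ℕ), 0 ≤ y ^ (2*n) / ((Nat.factorial (2*n) : ℝ)) := by
    intro y n
    apply div_nonneg ((even_two_mul n).pow_nonneg y) (Nat.cast_nonneg _)
  have hsummable : ∀ y : ℝ, Summable (fun n : ℕ => y ^ (2*n) / (Nat.factorial (2*n) : ℝ)) := by
    intro y
    have h := (Real.summable_pow_div_factorial |y|).comp_injective
      (mul_right_injective₀ (two_ne_zero (α := ℕ)))
    have heq : (fun n : ℕ => y ^ (2*n) / (Nat.factorial (2*n) : ℝ))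
        = (fun n : ℕ => |y| ^ n / (Nat.factorial n : ℝ)) ∘ (fun n => 2 * n) := by
      funext n
      simp only [Function.comp_apply]
      rw [(even_two_mul n).pow_abs]
    rw [heq]
    exact h
  have hcosh : ∀ z : ℝ, ENNReal.ofReal (ρ z) * ENNReal.ofReal (Real.cosh (t*z))
      = ∑' n : ℕ, ENNReal.ofReal (ρ z) *
          ENNReal.ofReal ((t*z) ^ (2*n) / (Nat.factorial (2*n) : ℝ)) := by
    intro z
    rw [Real.cosh_eq_tsum, ENNReal.ofReal_tsum_of_nonneg (hterm_nonneg (t*z)) (hsummable (t*z)),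
      ENNReal.tsum_mul_left]
  have hKsum : K = ∑' n : ℕ, ∫⁻ z, ENNReal.ofReal (ρ z) *
      ENNReal.ofReal ((t*z) ^ (2*n) / (Nat.factorial (2*n) : ℝ)) ∂volume := by
    rw [hK_def]
    rw [lintegral_congr hcosh]
    rw [lintegral_tsum]
    intro n
    apply AEMeasurable.mul hρm'.aemeasurable
    apply Measurable.aemeasurable
    exact (((measurable_const.mul measurable_id).pow measurable_const).div_const _).ennreal_ofReal
  -- Step D/E/F : evaluate each term
  set x : ℝ := t^2 * σ^2 with hx_def
  have hx0 : (0:ℝ) ≤ x := by positivity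
  have hx16 : x ≤ 1/16 := ht
  have ht2n : ∀ n : ℕ, (0:ℝ) ≤ t ^ (2*n) := fun n => (even_two_mul n).pow_nonneg t
  have hB : (0:ℝ) < b ^ (-q) := Real.rpow_pos_of_pos hb _
  have hmeas2 : ∀ n : ℕ, Measurable fun z : ℝ =>
      ENNReal.ofReal (z^(2*n) * Real.exp (-((|z|/b) ^ q))) := by
    intro n
    exact ((measurable_id.pow_const (2*n)).mul
      ((((measurable_abs.div_const b).pow measurable_const).neg).exp)).ennreal_ofReal
  have hEqOn : ∀ n : ℕ, Set.EqOn (fun z : ℝ => z ^ (((2*n:ℕ)):ℝ) * Real.exp (-(b^(-q)) * z^q))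
      (fun z : ℝ => z^(2*n) * Real.exp (-((|z|/b) ^ q))) (Ioi 0) := by
    intro n z hz
    have hz0 : (0:ℝ) < z := hz
    simp only
    rw [Real.rpow_natCast, abs_of_pos hz0, Real.div_rpow hz0.le hb.le, Real.rpow_neg hb.le]
    ring_nf
  have hs2n : ∀ n : ℕ, (-1:ℝ) < ((2*n:ℕ):ℝ) := by
    intro n
    have : (0:ℝ) ≤ ((2*n:ℕ):ℝ) := Nat.cast_nonneg _
    linarith
  have hIntOn : ∀ n : ℕ, IntegrableOn (fun z : ℝ => z^(2*n) * Real.exp (-((|z|/b) ^ q)))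
      (Ioi 0) volume := by
    intro n
    exact (integrableOn_rpow_mul_exp_neg_mul_rpow (hs2n n) hq0 hB).congr_fun (hEqOn n)
      measurableSet_Ioi
  have hval : ∀ n : ℕ, ∫ z in Ioi (0:ℝ), z^(2*n) * Real.exp (-((|z|/b) ^ q))
      = b^(2*n+1) * (1/q) * Real.Gamma ((((2*n:ℕ):ℝ)+1)/q) := by
    intro n
    rw [← setIntegral_congr_fun measurableSet_Ioi (hEqOn n),
      integral_rpow_mul_exp_neg_mul_rpow hq0 (hs2n n) hB]
    rw [← Real.rpow_mul hb.le]
    congr 2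
    · rw [show -q * (-(((2*n:ℕ):ℝ)+1)/q) = ((2*n+1:ℕ):ℝ) by push_cast; field_simp]
      rw [Real.rpow_natCast]
  have hGsplit : ∀ n : ℕ, (∫⁻ z, ENNReal.ofReal (z^(2*n) * Real.exp (-((|z|/b) ^ q))) ∂volume)
      = 2 * ENNReal.ofReal (b^(2*n+1) * (1/q) * Real.Gamma ((((2*n:ℕ):ℝ)+1)/q)) := by
    intro n
    rw [← lintegral_add_compl (fun z => ENNReal.ofReal (z^(2*n) * Real.exp (-((|z|/b) ^ q))))
      (measurableSet_Iio (a := (0:ℝ))), Set.compl_Iio]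
    have hIci : (∫⁻ z in Ici (0:ℝ), ENNReal.ofReal (z^(2*n) * Real.exp (-((|z|/b) ^ q))) ∂volume)
        = ∫⁻ z in Ioi (0:ℝ), ENNReal.ofReal (z^(2*n) * Real.exp (-((|z|/b) ^ q))) ∂volume :=
      (setLIntegral_congr (Ioi_ae_eq_Ici (μ := (volume : Measure ℝ)) (a := 0))).symm
    have hIio : (∫⁻ z in Iio (0:ℝ), ENNReal.ofReal (z^(2*n) * Real.exp (-((|z|/b) ^ q))) ∂volume)
        = ∫⁻ z in Ioi (0:ℝ), ENNReal.ofReal (z^(2*n) * Real.exp (-((|z|/b) ^ q))) ∂volume := by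
      have hrestr : (volume : Measure ℝ).restrict (Iio 0)
          = Measure.map Neg.neg ((volume : Measure ℝ).restrict (Ioi 0)) := by
        conv_lhs => rw [← Measure.map_neg_eq_self (volume : Measure ℝ)]
        rw [Measure.restrict_map measurable_neg measurableSet_Iio]
        congr 1
        ext z
        simp
      rw [hrestr, lintegral_map (hmeas2 n) measurable_neg]
      apply lintegral_congr
      intro z
      rw [(even_two_mul n).neg_pow, abs_neg]
    rw [hIci, hIio, ← two_mul]
    congr 1
    rw [← hval n, ← MeasureTheory.ofReal_integral_eq_lintegral_ofReal (hIntOn n)]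
    apply ae_of_all
    intro z
    have : (0:ℝ) ≤ z^(2*n) := (even_two_mul n).pow_nonneg z
    positivity
  -- the real-valued coefficient inequality
  have hmom := Gamma_moment_bound (1/q) (by positivity) ((div_le_one hq0).mpr hq)
  have hterm : ∀ n : ℕ, (∫⁻ z, ENNReal.ofReal (ρ z) *
      ENNReal.ofReal ((t*z) ^ (2*n) / (Nat.factorial (2*n) : ℝ)) ∂volume)
      ≤ ENNReal.ofReal (x^n) := by
    intro n
    have hC0 : (0:ℝ) ≤ c * t^(2*n) / (Nat.factorial (2*n):ℝ) :=
      div_nonneg (mul_nonneg hc.le (ht2n n)) (Nat.cast_nonneg _)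
    have e1 : ∀ z : ℝ, ENNReal.ofReal (ρ z) *
        ENNReal.ofReal ((t*z) ^ (2*n) / (Nat.factorial (2*n) : ℝ))
        = ENNReal.ofReal (c * t^(2*n) / (Nat.factorial (2*n):ℝ)) *
          ENNReal.ofReal (z^(2*n) * Real.exp (-((|z|/b) ^ q))) := by
      intro z
      rw [← ENNReal.ofReal_mul (hρ_nonneg z), ← ENNReal.ofReal_mul hC0]
      congr 1
      simp only [hρ_def]
      ring
    rw [lintegral_congr e1, lintegral_const_mul _ (hmeas2 n), hGsplit n]
    have hV0 : (0:ℝ) ≤ b^(2*n+1) * (1/q) * Real.Gamma ((((2*n:ℕ):ℝ)+1)/q) := by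
      have := Real.Gamma_pos_of_pos (show (0:ℝ) < (((2*n:ℕ):ℝ)+1)/q by positivity)
      positivity
    calc ENNReal.ofReal (c * t^(2*n) / (Nat.factorial (2*n):ℝ)) *
          (2 * ENNReal.ofReal (b^(2*n+1) * (1/q) * Real.Gamma ((((2*n:ℕ):ℝ)+1)/q)))
        = ENNReal.ofReal ((c * t^(2*n) / (Nat.factorial (2*n):ℝ)) *
            (2 * (b^(2*n+1) * (1/q) * Real.Gamma ((((2*n:ℕ):ℝ)+1)/q)))) := by
          rw [ENNReal.ofReal_mul hC0, ENNReal.ofReal_mul (by norm_num : (0:ℝ) ≤ 2)]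
          norm_num
      _ ≤ ENNReal.ofReal (x^n) := by
          apply ENNReal.ofReal_le_ofReal
          -- the key real inequality
          have hmomn := hmom n
          rw [show (2*(n:ℝ)+1) * (1/q) = (((2*n:ℕ):ℝ)+1)/q by push_cast; ring,
            show 3 * (1/q) = 3/q by ring] at hmomn
          have hdiv : Real.Gamma ((((2*n:ℕ):ℝ)+1)/q) / ((Nat.factorial (2*n):ℝ) * Real.Gamma (1/q))
              ≤ Real.Gamma (3/q)^n / Real.Gamma (1/q)^n := by
            rw [div_le_div_iff₀ (by positivity) (by positivity)]
            have hfac : (0:ℝ) < (Nat.factorial (2*n):ℝ) := by positivity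
            nlinarith [hmomn]
          have hL : (c * t^(2*n) / (Nat.factorial (2*n):ℝ)) *
              (2 * (b^(2*n+1) * (1/q) * Real.Gamma ((((2*n:ℕ):ℝ)+1)/q)))
              = (t^(2*n) * b^(2*n)) *
                (Real.Gamma ((((2*n:ℕ):ℝ)+1)/q) / ((Nat.factorial (2*n):ℝ) * Real.Gamma (1/q))) := by
            rw [hc_def]
            have hfac : (0:ℝ) < (Nat.factorial (2*n):ℝ) := by positivity
            field_simp
            ring
          have hR : x^n = (t^(2*n) * b^(2*n)) * (Real.Gamma (3/q)^n / Real.Gamma (1/q)^n) := by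
            rw [hx_def, hσ]
            rw [show t^2 * (b^2 * Real.Gamma (3/q) / Real.Gamma (1/q))
              = (t^2 * b^2) * (Real.Gamma (3/q) / Real.Gamma (1/q)) by ring]
            rw [mul_pow, mul_pow, div_pow, ← pow_mul, ← pow_mul]
          rw [hL, hR]
          apply mul_le_mul_of_nonneg_left hdiv (mul_nonneg (ht2n n) (by positivity))
  -- Step H : geometric sum
  rw [hKsum]
  calc (∑' n : ℕ, ∫⁻ z, ENNReal.ofReal (ρ z) *
        ENNReal.ofReal ((t*z) ^ (2*n) / (Nat.factorial (2*n) : ℝ)) ∂volume)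
      ≤ ∑' n : ℕ, ENNReal.ofReal (x^n) := ENNReal.tsum_le_tsum hterm
    _ = ∑' n : ℕ, (ENNReal.ofReal x)^n := by
        apply tsum_congr
        intro n
        exact ENNReal.ofReal_pow hx0 n
    _ = (1 - ENNReal.ofReal x)⁻¹ := ENNReal.tsum_geometric _
    _ ≤ ENNReal.ofReal (Real.exp (4*x)) := by
        have h3 : (0:ℝ) < Real.exp (4*x) := Real.exp_pos _
        have h1 : Real.exp (-(4*x)) ≤ 1 - x := by
          have h2 : 4*x + 1 ≤ Real.exp (4*x) := Real.add_one_le_exp (4*x)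
          rw [Real.exp_neg, inv_eq_one_div, div_le_iff₀ h3]
          nlinarith
        calc (1 - ENNReal.ofReal x)⁻¹ ≤ (ENNReal.ofReal (Real.exp (-(4*x))))⁻¹ := by
              apply ENNReal.inv_le_inv.mpr
              rw [← ENNReal.ofReal_one, ← ENNReal.ofReal_sub 1 hx0]
              exact ENNReal.ofReal_le_ofReal h1
          _ = ENNReal.ofReal (Real.exp (4*x)) := by
              rw [Real.exp_neg, ENNReal.ofReal_inv_of_pos h3, inv_inv]

/-- **Intermediate Chernoff bound (proof of Theorem 2).** If `S` is the sum of `d` i.i.d.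
generalized Gaussian variables (joint law: the `d`-fold product measure) with common
variance `σ²`, then for `τ > 0` with `τ²d ≥ 16` and any `s`,
`P(S ≥ s) ≤ exp(−s/(τσ√d))·exp(4/τ²)`. -/
theorem genGaussian_sum_chernoff_bound
    (d : ℕ) (hd : 1 ≤ d) (b q : ℝ) (hb : 0 < b) (hq : 1 ≤ q)
    (σ : ℝ) (hσ0 : 0 ≤ σ) (hσ : σ ^ 2 = b ^ 2 * Real.Gamma (3 / q) / Real.Gamma (1 / q))
    (τ : ℝ) (hτ : 0 < τ) (hτd : 16 ≤ τ ^ 2 * (d : ℝ)) (s : ℝ) :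
    Measure.pi (fun _ : Fin d => genGaussian b q) {w | s ≤ ∑ i, w i} ≤
      ENNReal.ofReal
        (Real.exp (-(s / (τ * σ * Real.sqrt d))) * Real.exp (4 / τ ^ 2)) := by
  have hq0 : (0:ℝ) < q := lt_of_lt_of_le one_pos hq
  have hΓq : 0 < Real.Gamma (1/q) := Real.Gamma_pos_of_pos (by positivity)
  have hΓ3q : 0 < Real.Gamma (3/q) := Real.Gamma_pos_of_pos (by positivity)
  have hσ2 : 0 < σ^2 := by rw [hσ]; positivity
  have hσpos : 0 < σ := by
    rcases hσ0.lt_or_eq with h | h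
    · exact h
    · exfalso; rw [← h] at hσ2; simp at hσ2
  have hd0 : (0:ℝ) < (d:ℝ) := by exact_mod_cast Nat.cast_pos.mpr hd
  have hsd : 0 < Real.sqrt d := Real.sqrt_pos.mpr hd0
  set t : ℝ := 1 / (τ * σ * Real.sqrt d) with ht_def
  have htpos : 0 < t := by positivity
  haveI : SigmaFinite (genGaussian b q) := by unfold genGaussian; infer_instance
  have hmeasS : Measurable fun w : Fin d → ℝ => ∑ i, w i := by
    apply Finset.measurable_sum
    intro i _
    exact measurable_pi_apply i
  have hfm : Measurable fun w : Fin d → ℝ => ENNReal.ofReal (Real.exp (t * ∑ i, w i)) :=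
    ((hmeasS.const_mul t).exp).ennreal_ofReal
  set ν := Measure.pi (fun _ : Fin d => genGaussian b q) with hν_def
  have hsub : ν {w | s ≤ ∑ i, w i} ≤
      ν {w | ENNReal.ofReal (Real.exp (t*s)) ≤ ENNReal.ofReal (Real.exp (t * ∑ i, w i))} := by
    apply measure_mono
    intro w hw
    simp only [Set.mem_setOf_eq] at *
    exact ENNReal.ofReal_le_ofReal (Real.exp_le_exp.mpr (mul_le_mul_of_nonneg_left hw htpos.le))
  have hmarkov := mul_meas_ge_le_lintegral₀ (μ := ν) hfm.aemeasurable (ENNReal.ofReal (Real.exp (t*s)))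
  have h5 : ENNReal.ofReal (Real.exp (t*s)) * ν {w | s ≤ ∑ i, w i} ≤
      ∫⁻ w, ENNReal.ofReal (Real.exp (t * ∑ i, w i)) ∂ν :=
    le_trans (mul_le_mul_right hsub _) hmarkov
  have hprod : (∫⁻ w, ENNReal.ofReal (Real.exp (t * ∑ i, w i)) ∂ν)
      = (∫⁻ z, ENNReal.ofReal (Real.exp (t*z)) ∂genGaussian b q) ^ d := by
    rw [← lintegral_pi_pow (genGaussian b q) (fun z => ENNReal.ofReal (Real.exp (t*z)))
      (((measurable_id.const_mul t).exp).ennreal_ofReal) d]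
    apply lintegral_congr
    intro w
    rw [Finset.mul_sum, Real.exp_sum, ENNReal.ofReal_prod_of_nonneg]
    intro i _
    exact (Real.exp_pos _).le
  have htσ : t^2 * σ^2 = 1/(τ^2 * (d:ℝ)) := by
    rw [ht_def, div_pow, one_pow, mul_pow, mul_pow, Real.sq_sqrt hd0.le]
    field_simp
  have ht2 : t^2*σ^2 ≤ 1/16 := by
    rw [htσ, div_le_div_iff₀ (by positivity) (by norm_num)]
    linarith
  have hmgf := genGaussian_mgf_le b q hb hq σ hσ t ht2
  have hεne : ENNReal.ofReal (Real.exp (t*s)) ≠ 0 := (ENNReal.ofReal_pos.mpr (Real.exp_pos _)).ne'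
  have hεtop : ENNReal.ofReal (Real.exp (t*s)) ≠ ⊤ := ENNReal.ofReal_ne_top
  calc ν {w | s ≤ ∑ i, w i}
      = (ENNReal.ofReal (Real.exp (t*s)))⁻¹ *
          (ENNReal.ofReal (Real.exp (t*s)) * ν {w | s ≤ ∑ i, w i}) := by
        rw [← mul_assoc, ENNReal.inv_mul_cancel hεne hεtop, one_mul]
    _ ≤ (ENNReal.ofReal (Real.exp (t*s)))⁻¹ *
          (∫⁻ w, ENNReal.ofReal (Real.exp (t * ∑ i, w i)) ∂ν) := mul_le_mul_right h5 _
    _ = (ENNReal.ofReal (Real.exp (t*s)))⁻¹ *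
          (∫⁻ z, ENNReal.ofReal (Real.exp (t*z)) ∂genGaussian b q) ^ d := by rw [hprod]
    _ ≤ (ENNReal.ofReal (Real.exp (t*s)))⁻¹ *
          (ENNReal.ofReal (Real.exp (4*(t^2*σ^2)))) ^ d := by
        exact mul_le_mul_right (pow_le_pow_left' hmgf d) _
    _ = ENNReal.ofReal (Real.exp (-(s / (τ * σ * Real.sqrt d))) * Real.exp (4 / τ ^ 2)) := by
        rw [← ENNReal.ofReal_pow (Real.exp_pos _).le, ← Real.exp_nat_mul,
          ← ENNReal.ofReal_inv_of_pos (Real.exp_pos _), ← Real.exp_neg,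
          ← ENNReal.ofReal_mul (Real.exp_pos _).le]
        congr 2
        · rw [ht_def]
          field_simp
        · rw [htσ]
          field_simp
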